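/- arXiv:1604.04806 — 2 statements merged into one kernel-verified Lean document; each statement's English description precedes it below -/
import Mathlib

section
/- At a negative interior minimum the nonlocal operator is strictly negative: Let Ω ⊂ ℝⁿ be open and bounded, α ∈ (0,2), G differentiable with G(0)=0 and G' ≥ c₀ > 0, and u : ℝⁿ → ℝ measurable with u ∈ L_α. Suppose x⁰ ∈ Ω satisfies u(x⁰) = min over the closure of Ω of u, u(x⁰) < 0, u ≥ 0 on ℝⁿ \ Ω, and u is not a.e. equal to the constant u(x⁰). Then the (absolutely convergent on {u(x⁰) < u(z)} and nonpositive-integrand) integral ∫_{ℝⁿ} G(u(x⁰) - u(z)) / |x⁰ - z|^{n+α} dz is strictly negative. -/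
open MeasureTheory Metric Set

noncomputable section

theorem stmt8 {n : ℕ} [NeZero n] (α : ℝ) (hα : α ∈ Ioo (0 : ℝ) 2)
    (Ω : Set (EuclideanSpace ℝ (Fin n))) (hΩo : IsOpen Ω) (hΩb : Bornology.IsBounded Ω)
    (G : ℝ → ℝ) (c₀ : ℝ) (hc₀ : 0 < c₀) (hGdiff : Differentiable ℝ G) (hG0 : G 0 = 0)
    (hG' : ∀ t, c₀ ≤ deriv G t)
    (u : EuclideanSpace ℝ (Fin n) → ℝ) (hu_meas : Measurable u)
    -- u ∈ L_α
    (hu_loc : LocallyIntegrable u volume)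
    (hu_Lα : Integrable (fun x => |u x| / (1 + ‖x‖ ^ ((n : ℝ) + α))) volume)
    (x0 : EuclideanSpace ℝ (Fin n)) (hx0 : x0 ∈ Ω)
    (hmin : ∀ z ∈ closure Ω, u x0 ≤ u z) (hneg : u x0 < 0)
    (hu_out : ∀ z ∉ Ω, 0 ≤ u z)
    (hnotconst : ¬ (∀ᵐ z ∂volume, u z = u x0))
    -- the integral is absolutely convergent
    (hint : Integrable (fun z => G (u x0 - u z) / ‖x0 - z‖ ^ ((n : ℝ) + α)) volume) :
    (∫ z, G (u x0 - u z) / ‖x0 - z‖ ^ ((n : ℝ) + α)) < 0 := by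
  set f : EuclideanSpace ℝ (Fin n) → ℝ :=
    fun z => G (u x0 - u z) / ‖x0 - z‖ ^ ((n : ℝ) + α) with hf
  have hGsm : StrictMono G := by
    apply strictMono_of_deriv_pos
    intro t
    exact lt_of_lt_of_le hc₀ (hG' t)
  have hle : ∀ z, u x0 ≤ u z := by
    intro z
    by_cases hz : z ∈ closure Ω
    · exact hmin z hz
    · exact le_of_lt (lt_of_lt_of_le hneg (hu_out z (fun h => hz (subset_closure h))))
  have hfle : ∀ z, f z ≤ 0 := by
    intro z
    apply div_nonpos_of_nonpos_of_nonneg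
    · have : u x0 - u z ≤ 0 := sub_nonpos.2 (hle z)
      calc G (u x0 - u z) ≤ G 0 := hGsm.monotone this
        _ = 0 := hG0
    · exact Real.rpow_nonneg (norm_nonneg _) _
  have hint_le : (∫ z, f z) ≤ 0 := integral_nonpos hfle
  rcases lt_or_eq_of_le hint_le with h | h
  · exact h
  · exfalso
    have hneg_int : Integrable (fun z => -f z) volume := hint.neg
    have hzero : (∫ z, -f z) = 0 := by
      rw [integral_neg, h, neg_zero]
    have hae : (fun z => -f z) =ᵐ[volume] 0 := by
      rw [← integral_eq_zero_iff_of_nonneg (fun z => neg_nonneg.2 (hfle z)) hneg_int]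
      exact hzero
    apply hnotconst
    have hne : ∀ᵐ z ∂(volume : Measure (EuclideanSpace ℝ (Fin n))), z ≠ x0 := by
      rw [ae_iff]
      simp only [not_not]
      have : {z : EuclideanSpace ℝ (Fin n) | z = x0} = {x0} := by ext; simp
      rw [this]
      exact measure_singleton x0
    filter_upwards [hae, hne] with z hz hzne
    have hfz : f z = 0 := by simpa [neg_eq_zero] using hz
    have hden : (0 : ℝ) < ‖x0 - z‖ ^ ((n : ℝ) + α) := by
      apply Real.rpow_pos_of_pos
      rw [norm_pos_iff, sub_ne_zero]
      exact fun h => hzne h.symm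
    have hnum : G (u x0 - u z) = 0 := by
      rcases div_eq_zero_iff.1 hfz with h' | h'
      · exact h'
      · exact absurd h' (ne_of_gt hden)
    have : u x0 - u z = 0 := by
      have := hGsm.injective (hnum.trans hG0.symm)
      exact this
    linarith [sub_eq_zero.1 this]
end
end

section
/- Key inequality at a negative minimum of the antisymmetric function: Let λ ∈ ℝ, Σ = {x : x₁ < λ}, and w : ℝⁿ → ℝ with w(x^λ) = -w(x). Let G be C¹ with G'(t) ≥ c₀ > 0. Suppose x ∈ Σ is such that w(x) = min_Σ w < 0. Write Σ₋ = {y ∈ Σ : w(x) + w(y) ≤ 0} and Σ₊ = {y ∈ Σ : w(x) + w(y) > 0}, and for real numbers a ≥ b, G(a) - G(b) ≥ c₀(a - b). Then with u_λ(y) = u(y^λ) and w = u_λ - u one has the pointwise bounds: on Σ₋, [G(u_λ(x)-u_λ(y)) - G(u(x)-u(y))]/|x-y|^{n+α} + [G(u_λ(x)-u(y)) - G(u(x)-u_λ(y))]/|x-y^λ|^{n+α} ≤ 2c₀ w(x)/|x-y^λ|^{n+α}. -/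
noncomputable section

/-- Reflection of `x` across the hyperplane `{x₁ = λ}` in `ℝⁿ`. -/
def reflHyp {n : ℕ} [NeZero n] (l : ℝ) (x : EuclideanSpace ℝ (Fin n)) :
    EuclideanSpace ℝ (Fin n) :=
  WithLp.toLp 2 (Function.update x 0 (2 * l - x 0))

lemma reflHyp_apply_zero {n : ℕ} [NeZero n] (l : ℝ) (x : EuclideanSpace ℝ (Fin n)) :
    reflHyp l x 0 = 2 * l - x 0 := by
  simp [reflHyp]

lemma reflHyp_apply_ne {n : ℕ} [NeZero n] (l : ℝ) (x : EuclideanSpace ℝ (Fin n))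
    (i : Fin n) (hi : i ≠ 0) : reflHyp l x i = x i := by
  simp [reflHyp, Function.update_of_ne hi]

lemma reflHyp_involutive {n : ℕ} [NeZero n] (l : ℝ) (x : EuclideanSpace ℝ (Fin n)) :
    reflHyp l (reflHyp l x) = x := by
  ext i
  by_cases hi : i = 0
  · subst hi
    rw [reflHyp_apply_zero, reflHyp_apply_zero]; ring
  · rw [reflHyp_apply_ne _ _ _ hi, reflHyp_apply_ne _ _ _ hi]

lemma norm_sub_le_norm_sub_refl {n : ℕ} [NeZero n] (l : ℝ)
    (x y : EuclideanSpace ℝ (Fin n)) (hx : x 0 < l) (hy : y 0 < l) :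
    ‖x - y‖ ≤ ‖x - reflHyp l y‖ := by
  rw [EuclideanSpace.norm_eq, EuclideanSpace.norm_eq]
  apply Real.sqrt_le_sqrt
  apply Finset.sum_le_sum
  intro i _
  by_cases hi : i = 0
  · subst hi
    simp only [PiLp.sub_apply, reflHyp_apply_zero, Real.norm_eq_abs, sq_abs]
    nlinarith [mul_pos (sub_pos.mpr hx) (sub_pos.mpr hy)]
  · simp only [PiLp.sub_apply, reflHyp_apply_ne _ _ _ hi]
    exact le_refl _

theorem stmt9 {n : ℕ} [NeZero n] (l α : ℝ) (hα : 0 < α)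
    (G : ℝ → ℝ) (c₀ : ℝ) (hc₀ : 0 < c₀)
    (hG : ∀ a b : ℝ, b ≤ a → c₀ * (a - b) ≤ G a - G b)
    (u : EuclideanSpace ℝ (Fin n) → ℝ)
    (w : EuclideanSpace ℝ (Fin n) → ℝ)
    (hw : ∀ y, w y = u (reflHyp l y) - u y)
    (x : EuclideanSpace ℝ (Fin n)) (hx : x 0 < l)
    (hxneg : w x < 0) (hxmin : ∀ y : EuclideanSpace ℝ (Fin n), y 0 < l → w x ≤ w y)
    (y : EuclideanSpace ℝ (Fin n)) (hy : y 0 < l) (hyx : y ≠ x)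
    (hySm : w x + w y ≤ 0) :
    (G (u (reflHyp l x) - u (reflHyp l y)) - G (u x - u y)) / ‖x - y‖ ^ ((n : ℝ) + α) +
        (G (u (reflHyp l x) - u y) - G (u x - u (reflHyp l y))) /
          ‖x - reflHyp l y‖ ^ ((n : ℝ) + α) ≤
      2 * c₀ * w x / ‖x - reflHyp l y‖ ^ ((n : ℝ) + α) := by
  have hwxy : w x ≤ w y := hxmin y hy
  -- reflection of y differs from x
  have hrx : x ≠ reflHyp l y := by
    intro h
    have : x 0 = 2 * l - y 0 := by rw [h, reflHyp_apply_zero]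
    linarith
  have hD1 : (0:ℝ) < ‖x - y‖ ^ ((n : ℝ) + α) := by
    apply Real.rpow_pos_of_pos
    rw [norm_pos_iff]
    exact sub_ne_zero.mpr (Ne.symm hyx)
  have hD2 : (0:ℝ) < ‖x - reflHyp l y‖ ^ ((n : ℝ) + α) := by
    apply Real.rpow_pos_of_pos
    rw [norm_pos_iff]
    exact sub_ne_zero.mpr hrx
  have hD12 : ‖x - y‖ ^ ((n : ℝ) + α) ≤ ‖x - reflHyp l y‖ ^ ((n : ℝ) + α) := by
    apply Real.rpow_le_rpow (norm_nonneg _) (norm_sub_le_norm_sub_refl l x y hx hy)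
    positivity
  set A := G (u (reflHyp l x) - u (reflHyp l y)) - G (u x - u y) with hA
  set B := G (u (reflHyp l x) - u y) - G (u x - u (reflHyp l y)) with hB
  -- bound A
  have hAle : A ≤ c₀ * (w x - w y) := by
    have hb : u (reflHyp l x) - u (reflHyp l y) ≤ u x - u y := by
      have h1 := hw x
      have h2 := hw y
      linarith
    have h := hG (u x - u y) (u (reflHyp l x) - u (reflHyp l y)) hb
    rw [hA, hw x, hw y]
    linarith
  have hAneg : A ≤ 0 := by
    have : c₀ * (w x - w y) ≤ 0 := mul_nonpos_of_nonneg_of_nonpos hc₀.le (by linarith)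
    linarith
  -- bound B
  have hBle : B ≤ c₀ * (w x + w y) := by
    have hwy' : w (reflHyp l y) = -(w y) := by
      rw [hw (reflHyp l y), reflHyp_involutive, hw y]; ring
    have hb : u (reflHyp l x) - u y ≤ u x - u (reflHyp l y) := by
      have h1 := hw x
      have h2 := hw y
      have h3 := hw (reflHyp l y)
      rw [hwy'] at h3
      linarith
    have h := hG (u x - u (reflHyp l y)) (u (reflHyp l x) - u y) hb
    have h3 := hw (reflHyp l y)
    rw [reflHyp_involutive] at h3
    rw [hB, hw x, hw y]
    linarith
  have key1 : A / ‖x - y‖ ^ ((n : ℝ) + α) ≤ A / ‖x - reflHyp l y‖ ^ ((n : ℝ) + α) := by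
    rw [div_le_div_iff₀ hD1 hD2]
    nlinarith
  have key2 : A / ‖x - reflHyp l y‖ ^ ((n : ℝ) + α) + B / ‖x - reflHyp l y‖ ^ ((n : ℝ) + α)
      ≤ 2 * c₀ * w x / ‖x - reflHyp l y‖ ^ ((n : ℝ) + α) := by
    rw [← add_div, div_le_div_iff₀ hD2 hD2]
    nlinarith
  linarith
end
end
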